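/- arXiv:2311.14261 — 2 statements merged into one kernel-verified Lean document; each statement's English description precedes it below -/
import Mathlib

section
/- Every complete lattice endowed with its Scott topology is a coherent space: the intersection of any two compact saturated subsets is compact. -/
universe u

/-- A subset is Scott open: an upper set inaccessible by directed suprema. -/
def ScottOpen {α : Type u} [Preorder α] (U : Set α) : Prop :=
  IsUpperSet U ∧ ∀ d : Set α, d.Nonempty → DirectedOn (· ≤ ·) d →
    ∀ a : α, IsLUB d a → a ∈ U → (d ∩ U).Nonempty

/-- A subset is Scott closed: a lower set closed under directed suprema. -/
def ScottClosed {α : Type u} [Preorder α] (C : Set α) : Prop :=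
  IsLowerSet C ∧ ∀ d : Set α, d ⊆ C → d.Nonempty → DirectedOn (· ≤ ·) d →
    ∀ a : α, IsLUB d a → a ∈ C

/-- A dcpo: every nonempty directed subset has a supremum. -/
def IsDcpo (α : Type u) [Preorder α] : Prop :=
  ∀ d : Set α, d.Nonempty → DirectedOn (· ≤ ·) d → ∃ a, IsLUB d a

/-- Compactness with respect to the Scott topology. -/
def ScottCompact {α : Type u} [Preorder α] (K : Set α) : Prop :=
  ∀ 𝒰 : Set (Set α), (∀ U ∈ 𝒰, ScottOpen U) → K ⊆ ⋃₀ 𝒰 →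
    ∃ F : Set (Set α), F ⊆ 𝒰 ∧ F.Finite ∧ K ⊆ ⋃₀ F

/-- Well-filteredness of the Scott topology of a poset. -/
def WellFiltered (α : Type u) [Preorder α] : Prop :=
  ∀ 𝒞 : Set (Set α), 𝒞.Nonempty →
    (∀ K ∈ 𝒞, ScottCompact K ∧ IsUpperSet K) →
    DirectedOn (fun A B : Set α => B ⊆ A) 𝒞 →
    ∀ U : Set α, ScottOpen U → ⋂₀ 𝒞 ⊆ U → ∃ K ∈ 𝒞, K ⊆ U

/-- The Hoare power construction: Scott closed subsets ordered by inclusion. -/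
structure HPoset (α : Type u) [Preorder α] where
  carrier : Set α
  closed' : ScottClosed carrier

instance {α : Type u} [Preorder α] : PartialOrder (HPoset α) where
  le A B := A.carrier ⊆ B.carrier
  le_refl _ := subset_rfl
  le_trans _ _ _ h h' := Set.Subset.trans h h'
  le_antisymm A B h h' := by
    cases A; cases B
    simp only [HPoset.mk.injEq]
    exact subset_antisymm h h'

/-- The Smyth power construction: nonempty Scott compact saturated subsets
ordered by reverse inclusion. -/
structure QPoset (α : Type u) [Preorder α] where
  carrier : Set α
  nonempty' : carrier.Nonempty
  compact' : ScottCompact carrier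
  upper' : IsUpperSet carrier

instance {α : Type u} [Preorder α] : PartialOrder (QPoset α) where
  le K K' := K'.carrier ⊆ K.carrier
  le_refl _ := subset_rfl
  le_trans _ _ _ h h' := Set.Subset.trans h' h
  le_antisymm K K' h h' := by
    cases K; cases K'
    simp only [QPoset.mk.injEq]
    exact subset_antisymm h' h

/-- The lattice of Scott open subsets ordered by inclusion. -/
structure OpenSet (α : Type u) [Preorder α] where
  carrier : Set α
  open' : ScottOpen carrier

instance {α : Type u} [Preorder α] : PartialOrder (OpenSet α) where
  le A B := A.carrier ⊆ B.carrier
  le_refl _ := subset_rfl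
  le_trans _ _ _ h h' := Set.Subset.trans h h'
  le_antisymm A B h h' := by
    cases A; cases B
    simp only [OpenSet.mk.injEq]
    exact subset_antisymm h h'

section Aux

variable {L : Type u} [CompleteLattice L]

/-- Unions of Scott open sets are Scott open. -/
lemma scottOpen_sUnion {S : Set (Set L)} (h : ∀ U ∈ S, ScottOpen U) :
    ScottOpen (⋃₀ S) := by
  constructor
  · intro a b hab ha
    obtain ⟨U, hU, haU⟩ := ha
    exact ⟨U, hU, (h U hU).1 hab haU⟩
  · intro d hd hdir a ha haU
    obtain ⟨U, hU, haU'⟩ := haU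
    obtain ⟨x, hxd, hxU⟩ := (h U hU).2 d hd hdir a ha haU'
    exact ⟨x, hxd, U, hU, hxU⟩

lemma isLUB_sup_left_image (x : L) {d : Set L} (hd : d.Nonempty) {b : L}
    (hb : IsLUB d b) : IsLUB ((x ⊔ ·) '' d) (x ⊔ b) := by
  constructor
  · rintro z ⟨y, hy, rfl⟩
    exact sup_le_sup_left (hb.1 hy) x
  · intro c hc
    obtain ⟨y₀, hy₀⟩ := hd
    have hx : x ≤ c := le_trans le_sup_left (hc ⟨y₀, hy₀, rfl⟩)
    have hbc : b ≤ c := hb.2 fun y hy => le_trans le_sup_right (hc ⟨y, hy, rfl⟩)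
    exact sup_le hx hbc

lemma directedOn_sup_left_image (x : L) {d : Set L}
    (hdir : DirectedOn (· ≤ ·) d) : DirectedOn (· ≤ ·) ((x ⊔ ·) '' d) := by
  rintro _ ⟨y, hy, rfl⟩ _ ⟨y', hy', rfl⟩
  obtain ⟨w, hw, hyw, hy'w⟩ := hdir y hy y' hy'
  exact ⟨x ⊔ w, ⟨w, hw, rfl⟩, sup_le_sup_left hyw x, sup_le_sup_left hy'w x⟩

/-- Joining with a fixed element is Scott continuous: preimages of Scott opens
are Scott open. -/
lemma preimage_sup_scottOpen (x : L) {U : Set L} (hU : ScottOpen U) :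
    ScottOpen {y : L | x ⊔ y ∈ U} := by
  constructor
  · intro a b hab ha
    exact hU.1 (sup_le_sup_left hab x) ha
  · intro d hd hdir b hb hbU
    obtain ⟨z, hz, hzU⟩ := hU.2 ((x ⊔ ·) '' d) (hd.image _)
      (directedOn_sup_left_image x hdir) (x ⊔ b) (isLUB_sup_left_image x hd hb) hbU
    obtain ⟨y, hy, rfl⟩ := hz
    exact ⟨y, hy, hzU⟩

/-- An upper bound in a directed set for a finite subset. -/
lemma exists_ub_of_finite {α : Type u} [Preorder α] {d : Set α} (hd : d.Nonempty)
    (hdir : DirectedOn (· ≤ ·) d) {S : Set α} (hS : S.Finite) (hSd : S ⊆ d) :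
    ∃ z ∈ d, ∀ s ∈ S, s ≤ z := by
  refine Set.Finite.induction_on
    (motive := fun S _ => S ⊆ d → ∃ z ∈ d, ∀ s ∈ S, s ≤ z) S hS ?_ ?_ hSd
  · intro _
    obtain ⟨z, hz⟩ := hd
    exact ⟨z, hz, by simp⟩
  · intro a s ha hs ih hsub
    obtain ⟨z, hzd, hz⟩ := ih (fun t ht => hsub (Set.mem_insert_of_mem a ht))
    have had : a ∈ d := hsub (Set.mem_insert a s)
    obtain ⟨w, hwd, haw, hzw⟩ := hdir a had z hzd
    refine ⟨w, hwd, ?_⟩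
    rintro t (rfl | ht)
    · exact haw
    · exact le_trans (hz t ht) hzw

/-- The key lemma: for a Scott compact set `K` and Scott open `W`, the set of
`x` such that `↑x ∩ ↑K ⊆ W` (expressed via joins) is Scott open. -/
lemma star_scottOpen {K W : Set L} (hK : ScottCompact K) (hW : ScottOpen W) :
    ScottOpen {x : L | ∀ y ∈ K, x ⊔ y ∈ W} := by
  constructor
  · intro a b hab ha y hy
    exact hW.1 (sup_le_sup_right hab y) (ha y hy)
  · intro d hd hdir a ha hastar
    -- cover K by the open sets {y | x ⊔ y ∈ W} for x ∈ d
    have hcov : K ⊆ ⋃₀ ((fun x => {y : L | x ⊔ y ∈ W}) '' d) := by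
      intro y hy
      have hlub : IsLUB ((· ⊔ y) '' d) (a ⊔ y) := by
        have h1 : ((· ⊔ y) '' d) = ((y ⊔ ·) '' d) := by
          ext z
          simp only [Set.mem_image]
          constructor
          · rintro ⟨u, hu, rfl⟩; exact ⟨u, hu, sup_comm y u⟩
          · rintro ⟨u, hu, rfl⟩; exact ⟨u, hu, sup_comm u y⟩
        rw [h1, sup_comm]
        exact isLUB_sup_left_image y hd ha
      have hdir' : DirectedOn (· ≤ ·) ((· ⊔ y) '' d) := by
        rintro _ ⟨u, hu, rfl⟩ _ ⟨u', hu', rfl⟩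
        obtain ⟨w, hw, huw, hu'w⟩ := hdir u hu u' hu'
        exact ⟨w ⊔ y, ⟨w, hw, rfl⟩, sup_le_sup_right huw y, sup_le_sup_right hu'w y⟩
      obtain ⟨z, ⟨x, hx, rfl⟩, hzW⟩ :=
        hW.2 ((· ⊔ y) '' d) (hd.image _) hdir' (a ⊔ y) hlub (hastar y hy)
      exact ⟨{y' : L | x ⊔ y' ∈ W}, ⟨x, hx, rfl⟩, hzW⟩
    obtain ⟨G, hG, hGfin, hGcov⟩ := hK _
      (by rintro _ ⟨x, hx, rfl⟩; exact preimage_sup_scottOpen x hW) hcov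
    -- choose for each member of G a point of d
    have hch : ∀ g : Set L, ∃ x : L, g ∈ G → x ∈ d ∧ g = {y : L | x ⊔ y ∈ W} := by
      intro g
      by_cases hg : g ∈ G
      · obtain ⟨x, hx, hgx⟩ := hG hg
        exact ⟨x, fun _ => ⟨hx, hgx.symm⟩⟩
      · exact ⟨⊥, fun h => absurd h hg⟩
    choose f hf using hch
    obtain ⟨z, hzd, hz⟩ := exists_ub_of_finite hd hdir (hGfin.image f)
      (by rintro _ ⟨g, hg, rfl⟩; exact (hf g hg).1)
    refine ⟨z, hzd, ?_⟩
    intro y hy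
    obtain ⟨g, hgG, hyg⟩ := hGcov hy
    have h1 : f g ⊔ y ∈ W := by
      have := (hf g hgG).2
      rw [this] at hyg
      exact hyg
    exact hW.1 (sup_le_sup_right (hz _ ⟨g, hgG, rfl⟩) y) h1

end Aux

theorem completeLattice_scott_coherent {L : Type u} [CompleteLattice L]
    (K₁ K₂ : Set L) (h₁ : ScottCompact K₁) (hu₁ : IsUpperSet K₁)
    (h₂ : ScottCompact K₂) (hu₂ : IsUpperSet K₂) :
    ScottCompact (K₁ ∩ K₂) := by
  intro 𝒰 h𝒰 hcov
  classical
  -- the family of "star" sets of finite subunions of 𝒰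
  set 𝒱 : Set (Set L) :=
    {V | ∃ F : Set (Set L), F ⊆ 𝒰 ∧ F.Finite ∧
      V = {x : L | ∀ y ∈ K₂, x ⊔ y ∈ ⋃₀ F}} with h𝒱
  have h𝒱open : ∀ V ∈ 𝒱, ScottOpen V := by
    rintro V ⟨F, hF𝒰, hFfin, rfl⟩
    exact star_scottOpen h₂ (scottOpen_sUnion fun U hU => h𝒰 U (hF𝒰 hU))
  have hK₁cov : K₁ ⊆ ⋃₀ 𝒱 := by
    intro x hx
    have hcov2 : K₂ ⊆ ⋃₀ ((fun U => {y : L | x ⊔ y ∈ U}) '' 𝒰) := by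
      intro y hy
      have hxy : x ⊔ y ∈ K₁ ∩ K₂ :=
        ⟨hu₁ le_sup_left hx, hu₂ le_sup_right hy⟩
      obtain ⟨U, hU, hmem⟩ := hcov hxy
      exact ⟨_, ⟨U, hU, rfl⟩, hmem⟩
    obtain ⟨G, hG, hGfin, hGcov⟩ := h₂ _
      (by rintro _ ⟨U, hU, rfl⟩; exact preimage_sup_scottOpen x (h𝒰 U hU)) hcov2
    have hch : ∀ g : Set L, ∃ U : Set L,
        g ∈ G → U ∈ 𝒰 ∧ g = {y : L | x ⊔ y ∈ U} := by
      intro g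
      by_cases hg : g ∈ G
      · obtain ⟨U, hU, hgU⟩ := hG hg
        exact ⟨U, fun _ => ⟨hU, hgU.symm⟩⟩
      · exact ⟨∅, fun h => absurd h hg⟩
    choose f hf using hch
    refine ⟨{x' : L | ∀ y ∈ K₂, x' ⊔ y ∈ ⋃₀ (f '' G)},
      ⟨f '' G, ?_, hGfin.image f, rfl⟩, ?_⟩
    · rintro _ ⟨g, hg, rfl⟩; exact (hf g hg).1
    · intro y hy
      obtain ⟨g, hgG, hyg⟩ := hGcov hy
      have h1 : x ⊔ y ∈ f g := by
        have := (hf g hgG).2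
        rw [this] at hyg
        exact hyg
      exact ⟨f g, ⟨g, hgG, rfl⟩, h1⟩
  obtain ⟨𝒢, h𝒢𝒱, h𝒢fin, h𝒢cov⟩ := h₁ 𝒱 h𝒱open hK₁cov
  have hch2 : ∀ V : Set L, ∃ F : Set (Set L), V ∈ 𝒢 →
      F ⊆ 𝒰 ∧ F.Finite ∧ V = {x : L | ∀ y ∈ K₂, x ⊔ y ∈ ⋃₀ F} := by
    intro V
    by_cases hV : V ∈ 𝒢
    · obtain ⟨F, hF1, hF2, hF3⟩ := h𝒢𝒱 hV
      exact ⟨F, fun _ => ⟨hF1, hF2, hF3⟩⟩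
    · exact ⟨∅, fun h => absurd h hV⟩
  choose Φ hΦ using hch2
  refine ⟨⋃ V ∈ 𝒢, Φ V, ?_, ?_, ?_⟩
  · intro U hU
    simp only [Set.mem_iUnion] at hU
    obtain ⟨V, hV, hUV⟩ := hU
    exact (hΦ V hV).1 hUV
  · exact Set.Finite.biUnion h𝒢fin fun V hV => (hΦ V hV).2.1
  · rintro z ⟨hz1, hz2⟩
    obtain ⟨V, hV𝒢, hzV⟩ := h𝒢cov hz1
    have hVeq := (hΦ V hV𝒢).2.2
    rw [hVeq] at hzV
    have := hzV z hz2
    rw [sup_idem] at this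
    obtain ⟨U, hU, hzU⟩ := this
    exact ⟨U, Set.mem_iUnion.2 ⟨V, Set.mem_iUnion.2 ⟨hV𝒢, hU⟩⟩, hzU⟩
end

section
/- Let L be a well-filtered dcpo. The map ψ : Q(H(L)) → H(Q(L)) defined by ψ(𝒦) = { K ∈ Q(L) : K ∩ A ≠ ∅ for all A ∈ 𝒦 } is well-defined, i.e., ψ(𝒦) is a Scott closed subset of Q(L). -/
universe u

/-- The map φ : H(Q(L)) → Q(H(L)) on underlying subsets. -/
def phiMap {L : Type u} [Preorder L] (𝒜 : Set (QPoset L)) : Set (HPoset L) :=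
  {A : HPoset L | ∀ K ∈ 𝒜, (A.carrier ∩ K.carrier).Nonempty}

/-- The map ψ : Q(H(L)) → H(Q(L)) on underlying subsets. -/
def psiMap {L : Type u} [Preorder L] (𝒦 : Set (HPoset L)) : Set (QPoset L) :=
  {K : QPoset L | ∀ A ∈ 𝒦, (K.carrier ∩ A.carrier).Nonempty}


lemma scottOpen_compl_of_closed {α : Type u} [Preorder α] {A : Set α}
    (hA : ScottClosed A) : ScottOpen Aᶜ := by
  refine ⟨hA.1.compl, fun d hdne hdir a hlub ha => ?_⟩
  by_contra h
  push_neg at h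
  have hsub : d ⊆ A := fun x hx => by
    by_contra hxA
    exact Set.eq_empty_iff_forall_notMem.mp h x ⟨hx, hxA⟩
  exact ha (hA.2 d hsub hdne hdir a hlub)

lemma scottOpen_sUnion_s11 {α : Type u} [Preorder α] {𝒰 : Set (Set α)}
    (h : ∀ U ∈ 𝒰, ScottOpen U) : ScottOpen (⋃₀ 𝒰) := by
  constructor
  · intro x y hxy hx
    obtain ⟨U, hU, hxU⟩ := hx
    exact ⟨U, hU, (h U hU).1 hxy hxU⟩
  · intro d hdne hdir a hlub ha
    obtain ⟨U, hU, haU⟩ := ha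
    obtain ⟨x, hxd, hxU⟩ := (h U hU).2 d hdne hdir a hlub haU
    exact ⟨x, hxd, U, hU, hxU⟩

theorem psi_well_defined' {L : Type u} [PartialOrder L] (hd : IsDcpo L)
    (hw : WellFiltered L) (𝒦 : Set (HPoset L)) (hne : 𝒦.Nonempty)
    (hc : ScottCompact 𝒦) (hu : IsUpperSet 𝒦) :
    ScottClosed (psiMap 𝒦) := by
  constructor
  · intro K K' hle hK A hA
    obtain ⟨x, hx1, hx2⟩ := hK A hA
    exact ⟨x, hle hx1, hx2⟩
  · intro d hdsub hdne hdir a hlub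
    set 𝒞 : Set (Set L) := QPoset.carrier '' d with h𝒞
    have h𝒞ne : 𝒞.Nonempty := hdne.image _
    have h𝒞mem : ∀ K ∈ 𝒞, ScottCompact K ∧ IsUpperSet K := by
      rintro _ ⟨K, hK, rfl⟩; exact ⟨K.compact', K.upper'⟩
    have h𝒞dir : DirectedOn (fun A B : Set L => B ⊆ A) 𝒞 := by
      rintro _ ⟨K, hK, rfl⟩ _ ⟨K', hK', rfl⟩
      obtain ⟨K'', hK'', h1, h2⟩ := hdir K hK K' hK'
      exact ⟨K''.carrier, ⟨K'', hK'', rfl⟩, h1, h2⟩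
    -- intersection is nonempty
    have hIne : (⋂₀ 𝒞).Nonempty := by
      by_contra h
      rw [Set.not_nonempty_iff_eq_empty] at h
      have hopen : ScottOpen (∅ : Set L) :=
        ⟨fun _ _ _ h => h, fun _ _ _ _ _ h => absurd h (Set.notMem_empty _)⟩
      obtain ⟨K, hK, hKsub⟩ := hw 𝒞 h𝒞ne h𝒞mem h𝒞dir ∅ hopen (h ▸ subset_rfl)
      obtain ⟨K₀, hK', rfl⟩ := hK
      obtain ⟨x, hx⟩ := K₀.nonempty'
      exact hKsub hx
    -- intersection is compact
    have hIc : ScottCompact (⋂₀ 𝒞) := by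
      intro 𝒰 h𝒰 hsub
      obtain ⟨K, hK, hKsub⟩ := hw 𝒞 h𝒞ne h𝒞mem h𝒞dir (⋃₀ 𝒰) (scottOpen_sUnion_s11 h𝒰) hsub
      obtain ⟨F, hF1, hF2, hF3⟩ := (h𝒞mem K hK).1 𝒰 h𝒰 hKsub
      exact ⟨F, hF1, hF2, (Set.sInter_subset_of_mem hK).trans hF3⟩
    have hIu : IsUpperSet (⋂₀ 𝒞) := by
      intro x y hxy hx K hK
      exact (h𝒞mem K hK).2 hxy (hx K hK)
    set Q : QPoset L := ⟨⋂₀ 𝒞, hIne, hIc, hIu⟩ with hQ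
    have hub : Q ∈ upperBounds d := by
      intro K hK
      show Q.carrier ⊆ K.carrier
      exact Set.sInter_subset_of_mem ⟨K, hK, rfl⟩
    have hle : ⋂₀ 𝒞 ⊆ a.carrier := hlub.2 hub
    intro A hA
    by_contra h
    rw [Set.not_nonempty_iff_eq_empty] at h
    have hsub : ⋂₀ 𝒞 ⊆ A.carrierᶜ := by
      intro x hx hxA
      exact absurd h (Set.nonempty_iff_ne_empty.mp ⟨x, hle hx, hxA⟩)
    obtain ⟨K, hK, hKsub⟩ := hw 𝒞 h𝒞ne h𝒞mem h𝒞dir A.carrierᶜ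
      (scottOpen_compl_of_closed A.closed') hsub
    obtain ⟨K', hK', rfl⟩ := hK
    obtain ⟨x, hx1, hx2⟩ := hdsub hK' A hA
    exact hKsub hx1 hx2

theorem psi_well_defined {L : Type u} [PartialOrder L] (hd : IsDcpo L)
    (hw : WellFiltered L) (𝒦 : Set (HPoset L)) (hne : 𝒦.Nonempty)
    (hc : ScottCompact 𝒦) (hu : IsUpperSet 𝒦) :
    ScottClosed (psiMap 𝒦) := psi_well_defined' hd hw 𝒦 hne hc hu
end
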